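/- Let K ≥ 1 and let f : ℝ^K → ℝ^K be a standard function on the nonnegative orthant (positivity: f(p) > 0 componentwise for all p ≥ 0; monotonicity: 0 ≤ p ≤ p' implies f(p) ≤ f(p'); scalability: α > 1 and p ≥ 0 imply α·f(p) > f(α·p) componentwise). Suppose f has a fixed point p* ≥ 0. Then for every initial vector p⁰ ≥ 0, the iterates defined by p^{t+1} = f(p^t) converge to p* as t → ∞. (This underlies Proposition 1(iii): when the equilibrium is unique, myopic best-response updating converges to it from any initial strategy.) -/

import Mathlib

open Filter

/-- Yates' convergence result: if a standard function (positive, monotone, scalable on the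
nonnegative orthant) has a fixed point `p*`, then the iterates `p^{t+1} = f(p^t)` converge
to `p*` from every nonnegative initial vector. -/
theorem standard_function_iterates_tendsto {K : ℕ} (hK : 1 ≤ K)
    (f : (Fin K → ℝ) → (Fin K → ℝ))
    (hpos : ∀ p : Fin K → ℝ, (∀ i, 0 ≤ p i) → ∀ i, 0 < f p i)
    (hmono : ∀ p p' : Fin K → ℝ, (∀ i, 0 ≤ p i) → (∀ i, p i ≤ p' i) →
      ∀ i, f p i ≤ f p' i)
    (hscale : ∀ α : ℝ, 1 < α → ∀ p : Fin K → ℝ, (∀ i, 0 ≤ p i) →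
      ∀ i, f (fun j => α * p j) i < α * f p i)
    (pstar : Fin K → ℝ) (hpstar : ∀ i, 0 ≤ pstar i) (hfix : f pstar = pstar)
    (p0 : Fin K → ℝ) (hp0 : ∀ i, 0 ≤ p0 i) :
    Filter.Tendsto (fun t => f^[t] p0) Filter.atTop (nhds pstar) := by
  have hne : Nonempty (Fin K) := Fin.pos_iff_nonempty.mp hK
  have hUn : (Finset.univ : Finset (Fin K)).Nonempty := Finset.univ_nonempty
  have hfixi : ∀ i, f pstar i = pstar i := fun i => congrFun hfix i
  have hps_pos : ∀ i, 0 < pstar i := fun i => (hfixi i) ▸ hpos pstar hpstar i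
  -- a density lemma: x ≤ α * y for all α > 1 implies x ≤ y (for y ≥ 0)
  have dense : ∀ x y : ℝ, 0 ≤ y → (∀ α : ℝ, 1 < α → x ≤ α * y) → x ≤ y := by
    intro x y hy h
    by_contra hxy
    push_neg at hxy
    rcases hy.eq_or_lt with h0 | h0
    · have := h 2 one_lt_two; nlinarith
    · have hα : 1 < (x + y) / (2 * y) := by rw [lt_div_iff₀ (by linarith)]; linarith
      have := h _ hα
      rw [div_mul_eq_mul_div] at this
      have h2 : (x + y) * y / (2 * y) = (x + y) / 2 := by
        field_simp
      rw [h2] at this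
      linarith
  -- comparison between positive fixed points
  have key : ∀ q p : Fin K → ℝ, (∀ i, 0 < q i) → f q = q → (∀ i, 0 < p i) → f p = p →
      ∀ i, q i ≤ p i := by
    intro q p hq hfq hp hfp
    set β := Finset.univ.sup' hUn (fun i => q i / p i) with hβ
    obtain ⟨i₀, -, hi₀⟩ := Finset.exists_mem_eq_sup' hUn (fun i => q i / p i)
    have hqβ : ∀ i, q i ≤ β * p i := by
      intro i
      have h1 : q i / p i ≤ β := by
        rw [hβ]; exact Finset.le_sup' (fun i => q i / p i) (Finset.mem_univ i)
      have h2 : q i / p i * p i = q i := div_mul_cancel₀ _ (hp i).ne'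
      nlinarith [hp i]
    have hβ1 : β ≤ 1 := by
      by_contra hb
      push_neg at hb
      have h1 : q i₀ ≤ f (fun j => β * p j) i₀ := by
        have := hmono q (fun j => β * p j) (fun i => (hq i).le) hqβ i₀
        rwa [hfq] at this
      have h2 : f (fun j => β * p j) i₀ < β * f p i₀ :=
        hscale β hb p (fun i => (hp i).le) i₀
      rw [hfp] at h2
      have h3 : β * p i₀ = q i₀ := by
        rw [hβ, hi₀]; exact div_mul_cancel₀ _ (hp i₀).ne'
      linarith
    intro i
    nlinarith [hqβ i, hp i]
  -- uniqueness of the nonnegative fixed point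
  have uniq : ∀ q : Fin K → ℝ, (∀ i, 0 ≤ q i) → f q = q → q = pstar := by
    intro q hq hfq
    have hqpos : ∀ i, 0 < q i := fun i => (congrFun hfq i) ▸ hpos q hq i
    exact funext fun i => le_antisymm (key q pstar hqpos hfq hps_pos hfix i)
      (key pstar q hps_pos hfix hqpos hfq i)
  -- convergence from above
  have upper : ∀ q : Fin K → ℝ, (∀ i, pstar i ≤ q i) → (∀ i, f q i ≤ q i) →
      Tendsto (fun t => f^[t] q) atTop (nhds pstar) := by
    intro q hq1 hq2
    set u : ℕ → Fin K → ℝ := fun t => f^[t] q with hu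
    have hsucc : ∀ t, u (t+1) = f (u t) := fun t => Function.iterate_succ_apply' f t q
    have hub : ∀ t, ∀ i, pstar i ≤ u t i := by
      intro t
      induction t with
      | zero => exact hq1
      | succ t ih =>
        intro i
        rw [hsucc t, ← hfixi i]
        exact hmono pstar (u t) hpstar ih i
    have hnn : ∀ t, ∀ i, 0 ≤ u t i := fun t i => (hpstar i).trans (hub t i)
    have hdec : ∀ t, ∀ i, u (t+1) i ≤ u t i := by
      intro t
      induction t with
      | zero => exact hq2
      | succ t ih =>
        intro i
        have h := hmono (u (t+1)) (u t) (hnn (t+1)) ih i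
        rw [← hsucc (t+1), ← hsucc t] at h
        exact h
    have hanti : ∀ i, Antitone fun t => u t i :=
      fun i => antitone_nat_of_succ_le (fun t => hdec t i)
    have hbdd : ∀ i, BddBelow (Set.range fun t => u t i) := by
      intro i
      refine ⟨pstar i, ?_⟩
      rintro x ⟨t, rfl⟩
      exact hub t i
    set L : Fin K → ℝ := fun i => ⨅ t, u t i with hL
    have hconv : ∀ i, Tendsto (fun t => u t i) atTop (nhds (L i)) :=
      fun i => tendsto_atTop_ciInf (hanti i) (hbdd i)
    have hLub : ∀ i, pstar i ≤ L i := fun i => le_ciInf (fun t => hub t i)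
    have hLle : ∀ t i, L i ≤ u t i := fun t i => ciInf_le (hbdd i) t
    have hLnn : ∀ i, 0 ≤ L i := fun i => (hpstar i).trans (hLub i)
    have hLpos : ∀ i, 0 < L i := fun i => lt_of_lt_of_le (hps_pos i) (hLub i)
    have h1 : ∀ i, f L i ≤ L i := by
      intro i
      refine le_ciInf fun t => ?_
      have h : f L i ≤ u (t+1) i := by
        rw [hsucc t]
        exact hmono L (u t) hLnn (fun j => hLle t j) i
      exact h.trans (hdec t i)
    have h2 : ∀ i, L i ≤ f L i := by
      have hα : ∀ α : ℝ, 1 < α → ∀ i, L i ≤ α * f L i := by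
        intro α hα
        have hev : ∀ᶠ t in atTop, ∀ i, u t i ≤ α * L i := by
          rw [eventually_all]
          intro i
          have hlt : L i < α * L i := by nlinarith [hLpos i]
          exact ((hconv i).eventually_lt_const hlt).mono fun t ht => ht.le
        obtain ⟨t, ht⟩ := hev.exists
        intro i
        refine le_of_lt ?_
        calc L i ≤ u (t+1) i := hLle (t+1) i
          _ = f (u t) i := by rw [hsucc t]
          _ ≤ f (fun j => α * L j) i := hmono (u t) _ (hnn t) ht i
          _ < α * f L i := hscale α hα L hLnn i
      intro i
      exact dense _ _ (hpos L hLnn i).le (fun α h => hα α h i)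
    have hfL : f L = L := funext fun i => le_antisymm (h1 i) (h2 i)
    have hLs : L = pstar := uniq L hLnn hfL
    exact tendsto_pi_nhds.2 fun i => hLs ▸ hconv i
  -- convergence from below
  have lower : ∀ q : Fin K → ℝ, (∀ i, 0 < q i) → (∀ i, q i ≤ f q i) → (∀ i, q i ≤ pstar i) →
      Tendsto (fun t => f^[t] q) atTop (nhds pstar) := by
    intro q hq0 hq1 hq2
    set u : ℕ → Fin K → ℝ := fun t => f^[t] q with hu
    have hsucc : ∀ t, u (t+1) = f (u t) := fun t => Function.iterate_succ_apply' f t q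
    have hnn : ∀ t, ∀ i, 0 ≤ u t i := by
      intro t
      induction t with
      | zero => exact fun i => (hq0 i).le
      | succ t ih =>
        intro i
        rw [hsucc t]
        exact (hpos (u t) ih i).le
    have hub : ∀ t, ∀ i, u t i ≤ pstar i := by
      intro t
      induction t with
      | zero => exact hq2
      | succ t ih =>
        intro i
        rw [hsucc t, ← hfixi i]
        exact hmono (u t) pstar (hnn t) ih i
    have hinc : ∀ t, ∀ i, u t i ≤ u (t+1) i := by
      intro t
      induction t with
      | zero => exact hq1
      | succ t ih =>
        intro i
        have h := hmono (u t) (u (t+1)) (hnn t) ih i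
        rw [← hsucc t, ← hsucc (t+1)] at h
        exact h
    have hmon : ∀ i, Monotone fun t => u t i :=
      fun i => monotone_nat_of_le_succ (fun t => hinc t i)
    have hbdd : ∀ i, BddAbove (Set.range fun t => u t i) := by
      intro i
      refine ⟨pstar i, ?_⟩
      rintro x ⟨t, rfl⟩
      exact hub t i
    set L : Fin K → ℝ := fun i => ⨆ t, u t i with hL
    have hconv : ∀ i, Tendsto (fun t => u t i) atTop (nhds (L i)) :=
      fun i => tendsto_atTop_ciSup (hmon i) (hbdd i)
    have hleL : ∀ t i, u t i ≤ L i := fun t i => le_ciSup (hbdd i) t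
    have hLpos : ∀ i, 0 < L i := fun i => lt_of_lt_of_le (hq0 i) (hleL 0 i)
    have hLnn : ∀ i, 0 ≤ L i := fun i => (hLpos i).le
    have h2 : ∀ i, L i ≤ f L i := by
      intro i
      refine ciSup_le fun t => ?_
      calc u t i ≤ u (t+1) i := hinc t i
        _ = f (u t) i := by rw [hsucc t]
        _ ≤ f L i := hmono (u t) L (hnn t) (fun j => hleL t j) i
    have h1 : ∀ i, f L i ≤ L i := by
      have hα : ∀ α : ℝ, 1 < α → ∀ i, f L i ≤ α * L i := by
        intro α hα
        have hαpos : (0:ℝ) < α := lt_trans one_pos hα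
        have hev : ∀ᶠ t in atTop, ∀ i, L i ≤ α * u t i := by
          rw [eventually_all]
          intro i
          have hlt : L i / α < L i := by
            rw [div_lt_iff₀ hαpos]
            nlinarith [hLpos i]
          refine ((hconv i).eventually_const_lt hlt).mono fun t ht => ?_
          rw [div_lt_iff₀ hαpos] at ht
          nlinarith
        obtain ⟨t, ht⟩ := hev.exists
        intro i
        have hA : f L i < α * f (u t) i :=
          lt_of_le_of_lt (hmono L _ hLnn ht i) (hscale α hα (u t) (hnn t) i)
        have hB : f (u t) i ≤ L i := by
          rw [← hsucc t]; exact hleL (t+1) i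
        exact le_of_lt (hA.trans_le (mul_le_mul_of_nonneg_left hB hαpos.le))
      intro i
      exact dense _ _ (hLnn i) (fun α h => hα α h i)
    have hfL : f L = L := funext fun i => le_antisymm (h1 i) (h2 i)
    have hLs : L = pstar := uniq L hLnn hfL
    exact tendsto_pi_nhds.2 fun i => hLs ▸ hconv i
  -- iterates preserve nonnegativity and order
  have iter_nonneg : ∀ (q : Fin K → ℝ), (∀ i, 0 ≤ q i) → ∀ t, ∀ i, 0 ≤ f^[t] q i := by
    intro q hq t
    induction t with
    | zero => exact hq
    | succ t ih =>
      intro i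
      rw [Function.iterate_succ_apply']
      exact (hpos _ ih i).le
  have iter_mono : ∀ (q r : Fin K → ℝ), (∀ i, 0 ≤ q i) → (∀ i, q i ≤ r i) →
      ∀ t, ∀ i, f^[t] q i ≤ f^[t] r i := by
    intro q r hq hqr t
    induction t with
    | zero => exact hqr
    | succ t ih =>
      intro i
      rw [Function.iterate_succ_apply', Function.iterate_succ_apply']
      exact hmono _ _ (iter_nonneg q hq t) ih i
  -- choose the scaling factor
  have hfp0 : ∀ i, 0 < f p0 i := hpos p0 hp0
  set S : ℝ := Finset.univ.sup' hUn (fun i => max (f p0 i / pstar i) (pstar i / f p0 i)) with hS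
  obtain ⟨i₁⟩ := hne
  have hSpos : 0 < S := by
    have h1 : f p0 i₁ / pstar i₁ ≤ S := by
      rw [hS]
      exact le_trans (le_max_left _ _)
        (Finset.le_sup' (fun i => max (f p0 i / pstar i) (pstar i / f p0 i)) (Finset.mem_univ i₁))
    exact lt_of_lt_of_le (div_pos (hfp0 i₁) (hps_pos i₁)) h1
  set α : ℝ := S + 1 with hαdef
  have hα1 : 1 < α := by simp [hαdef]; linarith
  have hαpos : (0:ℝ) < α := lt_trans one_pos hα1
  have bound1 : ∀ i, f p0 i ≤ α * pstar i := by
    intro i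
    have h1 : f p0 i / pstar i ≤ S := by
      rw [hS]
      exact le_trans (le_max_left _ _)
        (Finset.le_sup' (fun i => max (f p0 i / pstar i) (pstar i / f p0 i)) (Finset.mem_univ i))
    have h2 : f p0 i / pstar i * pstar i = f p0 i := div_mul_cancel₀ _ (hps_pos i).ne'
    nlinarith [hps_pos i]
  have bound2 : ∀ i, α⁻¹ * pstar i ≤ f p0 i := by
    intro i
    have h1 : pstar i / f p0 i ≤ S := by
      rw [hS]
      exact le_trans (le_max_right _ _)
        (Finset.le_sup' (fun i => max (f p0 i / pstar i) (pstar i / f p0 i)) (Finset.mem_univ i))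
    have h2 : pstar i / f p0 i * f p0 i = pstar i := div_mul_cancel₀ _ (hfp0 i).ne'
    have h3 : pstar i ≤ α * f p0 i := by nlinarith [hfp0 i]
    calc α⁻¹ * pstar i ≤ α⁻¹ * (α * f p0 i) :=
          mul_le_mul_of_nonneg_left h3 (inv_nonneg.2 hαpos.le)
      _ = f p0 i := by rw [← mul_assoc, inv_mul_cancel₀ hαpos.ne', one_mul]
  -- upper and lower sandwiching sequences
  set qU : Fin K → ℝ := fun j => α * pstar j with hqU
  set qL : Fin K → ℝ := fun j => α⁻¹ * pstar j with hqL
  have hU1 : ∀ i, pstar i ≤ qU i := fun i => le_mul_of_one_le_left (hpstar i) hα1.le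
  have hU2 : ∀ i, f qU i ≤ qU i := by
    intro i
    have h := hscale α hα1 pstar hpstar i
    rw [hfixi i] at h
    exact h.le
  have hL0 : ∀ i, 0 < qL i := fun i => mul_pos (inv_pos.2 hαpos) (hps_pos i)
  have hLeq : (fun j => α * qL j) = pstar := by
    funext j
    simp only [hqL]
    rw [← mul_assoc, mul_inv_cancel₀ hαpos.ne', one_mul]
  have hL1 : ∀ i, qL i ≤ f qL i := by
    intro i
    have h := hscale α hα1 qL (fun j => (hL0 j).le) i
    rw [hLeq, hfixi i] at h
    calc qL i = α⁻¹ * pstar i := rfl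
      _ ≤ α⁻¹ * (α * f qL i) := mul_le_mul_of_nonneg_left h.le (inv_nonneg.2 hαpos.le)
      _ = f qL i := by rw [← mul_assoc, inv_mul_cancel₀ hαpos.ne', one_mul]
  have hL2 : ∀ i, qL i ≤ pstar i := by
    intro i
    have hinv : α⁻¹ ≤ 1 := by
      rw [inv_le_one_iff₀]
      right; exact hα1.le
    calc qL i = α⁻¹ * pstar i := rfl
      _ ≤ 1 * pstar i := mul_le_mul_of_nonneg_right hinv (hpstar i)
      _ = pstar i := one_mul _
  have hupper := upper qU hU1 hU2
  have hlower := lower qL hL0 hL1 hL2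
  have hmid : Tendsto (fun t => f^[t] (f p0)) atTop (nhds pstar) := by
    rw [tendsto_pi_nhds]
    intro i
    refine tendsto_of_tendsto_of_tendsto_of_le_of_le
      (tendsto_pi_nhds.1 hlower i) (tendsto_pi_nhds.1 hupper i)
      (fun t => iter_mono qL (f p0) (fun j => (hL0 j).le) bound2 t i)
      (fun t => iter_mono (f p0) qU (fun j => (hfp0 j).le) bound1 t i)
  rw [← tendsto_add_atTop_iff_nat 1]
  simpa [Function.iterate_succ_apply] using hmid
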